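/- The canonicalization algorithm maps any spectrum of an SU(N) matrix into the canonical simplex: given λ_1,…,λ_N on the unit circle with Π λ_k = 1, set θ_k = arg(λ_k) ∈ [0,2π), S = (1/2π)Σθ_k (an integer), sort the θ_k ascending, subtract 2π from the largest S of them, and sort again; the resulting vector θ^canon lies in the simplex Ψ with vertices (y_k)_j = 2π(k/N − δ_{k≥j}). Explicitly, setting γ_k = (θ^canon_{k+1} − θ^canon_k)/2π for k < N and γ_N = 1 − Σ_{k<N} γ_k, one has γ_k ≥ 0, Σγ_k = 1, and Σ_k γ_k y_k = θ^canon. -/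

import Mathlib

open Real

/-- Vertices of the canonical cell: `(y_k)_j = 2π (k/N − δ_{k ≥ j})`
(zero-based implementation). -/
noncomputable def canonVertex (N : ℕ) (k j : Fin N) : ℝ :=
  2 * Real.pi * (((k : ℕ) + 1 : ℝ) / N - if (j : ℕ) ≤ (k : ℕ) then 1 else 0)

/-- The canonicalization algorithm maps any spectrum of an `SU(N)`
matrix into the canonical simplex.  Given `λ_1, …, λ_N` on the unit circle with
`Π λ_k = 1`, set `θ_k = arg λ_k ∈ [0, 2π)`, `S = (1/2π) Σ θ_k` (an integer),
sort the `θ_k` ascending (permutation `σ`), subtract `2π` from the largest `S`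
of them, and sort again (permutation `τ`); the resulting vector `θᶜ` lies in
the simplex `Ψ` with vertices `y_k`: setting
`γ_k = (θᶜ_{k+1} − θᶜ_k)/2π` for `k < N` and `γ_N = 1 − Σ_{k<N} γ_k`, one has
`γ_k ≥ 0`, `Σ γ_k = 1` and `Σ_k γ_k y_k = θᶜ`. -/
theorem canonicalization_lands_in_canonical_simplex
    (n : ℕ) (lam : Fin (n + 1) → ℂ)
    (hlam : ∀ k, ‖lam k‖ = 1) (hprod : ∏ k, lam k = 1)
    (θ : Fin (n + 1) → ℝ)
    (hθmem : ∀ k, θ k ∈ Set.Ico (0 : ℝ) (2 * Real.pi))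
    (hθarg : ∀ k, Complex.exp ((θ k : ℂ) * Complex.I) = lam k)
    (S : ℕ) (hS : ∑ k, θ k = 2 * Real.pi * S)
    (σ : Equiv.Perm (Fin (n + 1))) (hσ : Monotone (θ ∘ σ))
    (θsnap : Fin (n + 1) → ℝ)
    (hsnap : ∀ k : Fin (n + 1),
      θsnap k = θ (σ k) - if n + 1 - S ≤ (k : ℕ) then 2 * Real.pi else 0)
    (τ : Equiv.Perm (Fin (n + 1))) (hτ : Monotone (θsnap ∘ τ))
    (θc : Fin (n + 1) → ℝ) (hθc : θc = θsnap ∘ τ)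
    (γ : Fin (n + 1) → ℝ)
    (hγ : γ = Fin.snoc (fun k : Fin n => (θc k.succ - θc k.castSucc) / (2 * Real.pi))
      (1 - ∑ k : Fin n, (θc k.succ - θc k.castSucc) / (2 * Real.pi))) :
    (∀ k, 0 ≤ γ k) ∧ (∑ k, γ k = 1) ∧
      ∀ j : Fin (n + 1), ∑ k, γ k * canonVertex (n + 1) k j = θc j := by
  have hπ : (0:ℝ) < 2 * Real.pi := by positivity
  have hθc_mono : Monotone θc := hθc ▸ hτ
  -- S ≤ n
  have hSle : S ≤ n := by
    by_contra h
    push_neg at h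
    have h1 : ∑ k, θ k < ∑ _k : Fin (n+1), 2 * Real.pi :=
      Finset.sum_lt_sum_of_nonempty (by simp) (fun k _ => (hθmem k).2)
    rw [Finset.sum_const, Finset.card_univ, Fintype.card_fin, nsmul_eq_mul, hS] at h1
    have h2 : (n+1 : ℝ) ≤ (S:ℝ) := by exact_mod_cast Nat.succ_le_of_lt h
    push_cast at h1
    nlinarith
  -- sum of θsnap is 0
  have hsumsnap : ∑ k, θsnap k = 0 := by
    have h1 : ∑ k, θsnap k
        = ∑ k, (θ (σ k) - if n + 1 - S ≤ (k:ℕ) then 2*Real.pi else 0) :=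
      Finset.sum_congr rfl (fun k _ => hsnap k)
    have h2 : ∑ k, θ (σ k) = 2 * Real.pi * S := by rw [Equiv.sum_comp σ θ, hS]
    have h3 : ∑ k : Fin (n+1), (if n + 1 - S ≤ (k:ℕ) then 2*Real.pi else 0)
        = 2 * Real.pi * S := by
      rw [Fin.sum_univ_eq_sum_range (fun i => if n + 1 - S ≤ i then 2*Real.pi else 0) (n+1),
        ← Finset.sum_filter]
      have hfil : Finset.filter (fun i => n + 1 - S ≤ i) (Finset.range (n+1))
          = Finset.Ico (n + 1 - S) (n+1) := by
        ext i; simp [Finset.mem_Ico]; omega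
      rw [hfil, Finset.sum_const, Nat.card_Ico]
      have : n + 1 - (n + 1 - S) = S := by omega
      rw [this, nsmul_eq_mul]
      ring
    rw [h1, Finset.sum_sub_distrib, h2, h3]
    ring
  have hsumθc : ∑ k, θc k = 0 := by
    rw [hθc]
    calc ∑ k, (θsnap ∘ τ) k = ∑ k, θsnap k := Equiv.sum_comp τ θsnap
    _ = 0 := hsumsnap
  -- spread bound
  have key2 : ∀ a b, θsnap a ≤ θsnap b + 2 * Real.pi := by
    intro a b
    have ha' := hθmem (σ a); have hb' := hθmem (σ b)
    rw [hsnap a, hsnap b]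
    by_cases ha : n + 1 - S ≤ (a:ℕ)
    · rw [if_pos ha]
      by_cases hb : n + 1 - S ≤ (b:ℕ)
      · rw [if_pos hb]; linarith [ha'.2, hb'.1]
      · rw [if_neg hb]; linarith [ha'.2, hb'.1]
    · rw [if_neg ha]
      by_cases hb : n + 1 - S ≤ (b:ℕ)
      · rw [if_pos hb]
        have hab : a ≤ b := by
          have : (a:ℕ) ≤ (b:ℕ) := by omega
          exact this
        have hmono := hσ hab
        simp only [Function.comp] at hmono
        linarith
      · rw [if_neg hb]; linarith [ha'.2, hb'.1]
  -- auxiliary ℕ-indexed function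
  set F : ℕ → ℝ := fun i => θc ⟨min i n, by omega⟩ with hF
  have hFj : ∀ j : Fin (n+1), F (j:ℕ) = θc j := by
    intro j; simp only [hF]; congr 1
    exact Fin.ext (by simp [Nat.min_eq_left (Nat.lt_succ_iff.mp j.isLt)])
  have hFsucc : ∀ k : Fin n, F ((k:ℕ)+1) = θc k.succ := by
    intro k; simp only [hF]; congr 1
    exact Fin.ext (by simp [Nat.min_eq_left (Nat.succ_le_of_lt k.isLt)])
  have hFcast : ∀ k : Fin n, F (k:ℕ) = θc k.castSucc := by
    intro k; simp only [hF]; congr 1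
    exact Fin.ext (by simp [Nat.min_eq_left (le_of_lt k.isLt)])
  have hFn : F n = θc (Fin.last n) := by
    simp only [hF]; congr 1; exact Fin.ext (by simp)
  -- partial telescope
  have T1 : ∀ j : Fin (n+1),
      (∑ k : Fin n, if (j:ℕ) ≤ (k:ℕ) then θc k.succ - θc k.castSucc else 0)
        = θc (Fin.last n) - θc j := by
    intro j
    have h1 : ∀ k : Fin n, (if (j:ℕ) ≤ (k:ℕ) then θc k.succ - θc k.castSucc else 0)
        = (fun i : ℕ => if (j:ℕ) ≤ i then F (i+1) - F i else 0) (k:ℕ) := by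
      intro k; simp only [hFsucc k, hFcast k]
    rw [Finset.sum_congr rfl (fun k _ => h1 k),
      Fin.sum_univ_eq_sum_range (fun i => if (j:ℕ) ≤ i then F (i+1) - F i else 0) n,
      ← Finset.sum_filter]
    have hfil : Finset.filter (fun i => (j:ℕ) ≤ i) (Finset.range n)
        = Finset.Ico (j:ℕ) n := by
      ext i; simp [Finset.mem_Ico]; omega
    rw [hfil, Finset.sum_Ico_eq_sub _ (Nat.lt_succ_iff.mp j.isLt),
      Finset.sum_range_sub F, Finset.sum_range_sub F, hFn, hFj j]
    ring
  have Tfull : ∑ k : Fin n, (θc k.succ - θc k.castSucc) = θc (Fin.last n) - θc 0 := by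
    have h := T1 0
    simpa using h
  -- snoc facts
  have hγcast : ∀ k : Fin n,
      γ k.castSucc = (θc k.succ - θc k.castSucc) / (2*Real.pi) := by
    intro k; rw [hγ]; exact Fin.snoc_castSucc _ _ k
  have hγlast : γ (Fin.last n)
      = 1 - ∑ k : Fin n, (θc k.succ - θc k.castSucc) / (2*Real.pi) := by
    rw [hγ]; exact Fin.snoc_last _ _
  have hsumdiv : ∑ k : Fin n, (θc k.succ - θc k.castSucc) / (2*Real.pi)
      = (θc (Fin.last n) - θc 0) / (2*Real.pi) := by
    rw [← Finset.sum_div, Tfull]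
  -- Goal 1
  have g1 : ∀ k, 0 ≤ γ k := by
    intro k
    induction k using Fin.lastCases with
    | last =>
      rw [hγlast, hsumdiv]
      have h := key2 (τ (Fin.last n)) (τ 0)
      have h1 : θc (Fin.last n) - θc 0 ≤ 2 * Real.pi := by
        rw [hθc]; simp only [Function.comp]; linarith
      rw [sub_nonneg, div_le_one hπ]
      exact h1
    | cast k =>
      rw [hγcast]
      apply div_nonneg _ (le_of_lt hπ)
      rw [sub_nonneg]
      exact hθc_mono (le_of_lt (Fin.castSucc_lt_succ : k.castSucc < k.succ))
  -- Goal 2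
  have g2 : ∑ k, γ k = 1 := by
    rw [Fin.sum_univ_castSucc, hγlast, Finset.sum_congr rfl (fun k _ => hγcast k)]
    ring
  -- the key sums
  have hA : ∀ j : Fin (n+1), ∑ k, γ k * (if (j:ℕ) ≤ (k:ℕ) then (1:ℝ) else 0)
      = 1 + (θc 0 - θc j) / (2*Real.pi) := by
    intro j
    rw [Fin.sum_univ_castSucc]
    have hjn : (j:ℕ) ≤ ((Fin.last n : Fin (n+1)):ℕ) := by
      simp [Fin.val_last]
      exact Nat.lt_succ_iff.mp j.isLt
    have hlast : γ (Fin.last n) * (if (j:ℕ) ≤ ((Fin.last n : Fin (n+1)):ℕ) then (1:ℝ) else 0)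
        = γ (Fin.last n) := by rw [if_pos hjn]; ring
    have hterm : ∀ k : Fin n,
        γ k.castSucc * (if (j:ℕ) ≤ ((k.castSucc : Fin (n+1)):ℕ) then (1:ℝ) else 0)
        = (if (j:ℕ) ≤ (k:ℕ) then θc k.succ - θc k.castSucc else 0) / (2*Real.pi) := by
      intro k
      rw [hγcast, Fin.coe_castSucc]
      by_cases h : (j:ℕ) ≤ (k:ℕ) <;> simp [h]
    rw [hlast, hγlast, hsumdiv, Finset.sum_congr rfl (fun k _ => hterm k),
      ← Finset.sum_div, T1 j]
    field_simp
    ring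
  have hcount : ∀ k : Fin (n+1),
      (∑ j' : Fin (n+1), if (j':ℕ) ≤ (k:ℕ) then (1:ℝ) else 0) = (k:ℕ) + 1 := by
    intro k
    rw [Fin.sum_univ_eq_sum_range (fun i => if i ≤ (k:ℕ) then (1:ℝ) else 0) (n+1),
      ← Finset.sum_filter]
    have hfil : Finset.filter (fun i => i ≤ (k:ℕ)) (Finset.range (n+1))
        = Finset.range ((k:ℕ)+1) := by
      ext i; simp; omega
    rw [hfil, Finset.sum_const, Finset.card_range, nsmul_eq_mul]
    push_cast
    ring
  -- Goal 3
  have g3 : ∀ j : Fin (n+1), ∑ k, γ k * canonVertex (n+1) k j = θc j := by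
    intro j
    have hstep : ∀ k : Fin (n+1), γ k * canonVertex (n+1) k j
        = (2*Real.pi/((n:ℝ)+1)) * (∑ j' : Fin (n+1), γ k * (if (j':ℕ) ≤ (k:ℕ) then (1:ℝ) else 0))
          - 2*Real.pi * (γ k * (if (j:ℕ) ≤ (k:ℕ) then (1:ℝ) else 0)) := by
      intro k
      rw [← Finset.mul_sum, hcount k]
      unfold canonVertex
      push_cast
      ring
    rw [Finset.sum_congr rfl (fun k _ => hstep k), Finset.sum_sub_distrib,
      ← Finset.mul_sum, ← Finset.mul_sum, Finset.sum_comm]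
    have h1 : ∑ j' : Fin (n+1), ∑ k, γ k * (if (j':ℕ) ≤ (k:ℕ) then (1:ℝ) else 0)
        = ((n:ℝ)+1) + (((n:ℝ)+1) * θc 0) / (2*Real.pi) := by
      rw [Finset.sum_congr rfl (fun j' _ => hA j'), Finset.sum_add_distrib,
        Finset.sum_const, Finset.card_univ, Fintype.card_fin, ← Finset.sum_div,
        Finset.sum_sub_distrib, hsumθc, Finset.sum_const, Finset.card_univ,
        Fintype.card_fin, nsmul_eq_mul, nsmul_eq_mul]
      push_cast
      ring
    rw [h1, hA j]
    have hn1 : ((n:ℝ)+1) ≠ 0 := by positivity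
    field_simp
    ring
  exact ⟨g1, g2, g3⟩
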